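/- Let g_s and g_w be independent random variables, each with an α-μ distribution having CDF F_{g_i}(x) = 1 − exp(−μ x^{α/2}/Ω_i^α) Σ_{j=0}^{μ−1} μ^j x^{jα/2}/(j! Ω_i^{jα}), i ∈ {s, w}, where α, μ ∈ ℤ₊ and Ω_s, Ω_w > 0. Then g_min = min{g_s, g_w} has PDF f_{g_min}(x) = (α exp(−μ x^{α/2}/Ω̃))/(2 Ω_s^{αμ} Γ(μ)) Σ_{m=0}^{μ−1} μ^{μ+m} x^{α(μ+m)/2 − 1}/(m! Ω_w^{mα}) + (α exp(−μ x^{α/2}/Ω̃))/(2 Ω_w^{αμ} Γ(μ)) Σ_{n=0}^{μ−1} μ^{μ+n} x^{α(μ+n)/2 − 1}/(n! Ω_s^{nα}), where 1/Ω̃ = 1/Ω_s^α + 1/Ω_w^α. -/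

import Mathlib

open MeasureTheory Real

open MeasureTheory Real Finset

noncomputable section
namespace AMaux

/-- coefficient of the α-μ CDF sum -/
def coefA (α μ : ℕ) (Ω : ℝ) (j : ℕ) : ℝ := (μ:ℝ)^j / (j.factorial * Ω^(j*α))

/-- polynomial part -/
def Q (α μ : ℕ) (Ω u : ℝ) : ℝ := ∑ j ∈ Finset.range μ, coefA α μ Ω j * u ^ j

def Q' (α μ : ℕ) (Ω u : ℝ) : ℝ := ∑ j ∈ Finset.range μ, coefA α μ Ω j * (j * u ^ (j-1))

lemma hasDerivAt_Q (α μ : ℕ) (Ω u : ℝ) :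
    HasDerivAt (fun u => Q α μ Ω u) (Q' α μ Ω u) u := by
  apply HasDerivAt.fun_sum
  intro j _
  exact (hasDerivAt_pow j u).const_mul _

lemma telescope (α μ : ℕ) (Ω : ℝ) (hΩ : 0 < Ω) (u : ℝ) :
    (μ:ℝ)/Ω^α * Q α μ Ω u - Q' α μ Ω u = (μ:ℝ) * coefA α μ Ω μ * u^(μ-1) := by
  have hΩ' : (Ω:ℝ) ^ α ≠ 0 := pow_ne_zero _ hΩ.ne'
  have key : ∀ j : ℕ, (μ:ℝ)/Ω^α * (coefA α μ Ω j * u ^ j) - coefA α μ Ω j * (j * u^(j-1))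
      = ((j+1:ℕ):ℝ) * coefA α μ Ω (j+1) * u^((j+1)-1) - (j:ℝ) * coefA α μ Ω j * u^(j-1) := by
    intro j
    have h1 : ((j+1:ℕ):ℝ) * coefA α μ Ω (j+1) = (μ:ℝ)/Ω^α * coefA α μ Ω j := by
      simp only [coefA, Nat.factorial_succ]
      have hf : ((j.factorial : ℝ)) ≠ 0 := Nat.cast_ne_zero.mpr j.factorial_ne_zero
      have hp : Ω ^ ((j+1)*α) = Ω ^ (j*α) * Ω ^ α := by
        rw [← pow_add]; ring_nf
      rw [pow_succ, hp]
      push_cast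
      field_simp
    rw [h1]
    simp only [Nat.add_sub_cancel]
    ring
  rw [Q, Q', Finset.mul_sum, ← Finset.sum_sub_distrib]
  rw [Finset.sum_congr rfl (fun j _ => key j), Finset.sum_range_sub
    (fun j => (j:ℝ) * coefA α μ Ω j * u^(j-1))]
  simp

end AMaux

namespace AMaux

/-- the target pdf -/
def amPdf (α μ : ℕ) (Ωs Ωw x : ℝ) : ℝ :=
  (α * Real.exp (-(μ:ℝ) * x ^ ((α : ℝ) / 2) * ((Ωs ^ α)⁻¹ + (Ωw ^ α)⁻¹))) /
      (2 * Ωs ^ (α * μ) * Real.Gamma μ) *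
    ∑ m ∈ Finset.range μ,
      (μ:ℝ) ^ (μ + m) * x ^ ((α * (μ + m) : ℝ) / 2 - 1) / (m.factorial * Ωw ^ (m * α)) +
   (α * Real.exp (-(μ:ℝ) * x ^ ((α : ℝ) / 2) * ((Ωs ^ α)⁻¹ + (Ωw ^ α)⁻¹))) /
      (2 * Ωw ^ (α * μ) * Real.Gamma μ) *
    ∑ n ∈ Finset.range μ,
      (μ:ℝ) ^ (μ + n) * x ^ ((α * (μ + n) : ℝ) / 2 - 1) / (n.factorial * Ωs ^ (n * α))

lemma pdf_eq (α μ : ℕ) (hμ : 1 ≤ μ) (Ωs Ωw : ℝ) (hΩs : 0 < Ωs) (hΩw : 0 < Ωw)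
    (t : ℝ) (ht : 0 < t) :
    amPdf α μ Ωs Ωw t =
      Real.exp (-(μ:ℝ) * t ^ ((α:ℝ)/2) * ((Ωs^α)⁻¹+(Ωw^α)⁻¹)) * (((α:ℝ)/2) * t^((α:ℝ)/2 - 1)) *
        ((μ:ℝ) * coefA α μ Ωs μ * (t^((α:ℝ)/2))^(μ-1) * Q α μ Ωw (t^((α:ℝ)/2)) +
         Q α μ Ωs (t^((α:ℝ)/2)) * ((μ:ℝ) * coefA α μ Ωw μ * (t^((α:ℝ)/2))^(μ-1))) := by
  set p : ℝ := (α:ℝ)/2 with hp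
  set E : ℝ := Real.exp (-(μ:ℝ) * t ^ p * ((Ωs^α)⁻¹+(Ωw^α)⁻¹)) with hE
  have hpow : ∀ k:ℕ, (t^p)^k = t^(p*k) := fun k => by
    rw [← Real.rpow_natCast (t^p) k, ← Real.rpow_mul ht.le]
  have hG : Real.Gamma (μ:ℝ) = ((μ-1).factorial : ℝ) := by
    rw [show (μ:ℝ) = ((μ-1:ℕ):ℝ) + 1 by rw [Nat.cast_sub hμ]; ring,
      Real.Gamma_nat_eq_factorial]
  have hfac : (μ.factorial:ℝ) = (μ:ℝ) * ((μ-1).factorial:ℝ) := by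
    rw [← Nat.cast_mul, Nat.mul_factorial_pred (by omega)]
  have key : ∀ (Ωa Ωb : ℝ), 0 < Ωa → 0 < Ωb →
      (α * E)/(2 * Ωa^(α*μ) * Real.Gamma μ) *
        ∑ m ∈ Finset.range μ,
          (μ:ℝ)^(μ+m) * t^((α*(μ+m):ℝ)/2 - 1)/(m.factorial * Ωb^(m*α))
      = E * (p * t^(p-1)) *
        ((μ:ℝ) * coefA α μ Ωa μ * (t^p)^(μ-1) * Q α μ Ωb (t^p)) := by
    intro Ωa Ωb hΩa hΩb
    rw [Q, Finset.mul_sum, Finset.mul_sum, Finset.mul_sum]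
    refine Finset.sum_congr rfl fun m _ => ?_
    have e1 : t ^ ((α*(μ+m):ℝ)/2 - 1) = t^(p-1) * ((t^p)^(μ-1) * (t^p)^m) := by
      rw [hpow, hpow, ← Real.rpow_add ht, ← Real.rpow_add ht]
      congr 1
      rw [Nat.cast_sub hμ]
      push_cast
      ring
    rw [e1, coefA, coefA, hG]
    have h1 : ((μ-1).factorial : ℝ) ≠ 0 := Nat.cast_ne_zero.mpr (Nat.factorial_ne_zero _)
    have h2 : (m.factorial : ℝ) ≠ 0 := Nat.cast_ne_zero.mpr (Nat.factorial_ne_zero _)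
    have h3 : (Ωa:ℝ) ^ (μ*α) ≠ 0 := pow_ne_zero _ hΩa.ne'
    have h4 : (Ωb:ℝ) ^ (m*α) ≠ 0 := pow_ne_zero _ hΩb.ne'
    have h5 : (Ωa:ℝ) ^ (α*μ) ≠ 0 := pow_ne_zero _ hΩa.ne'
    rw [pow_add, hfac, show α*μ = μ*α from Nat.mul_comm α μ]
    field_simp
    ring
  rw [amPdf, key Ωs Ωw hΩs hΩw, key Ωw Ωs hΩw hΩs]
  ring

end AMaux

namespace AMaux

lemma Q_nonneg (α μ : ℕ) (Ω : ℝ) (hΩ : 0 < Ω) (u : ℝ) (hu : 0 ≤ u) :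
    0 ≤ Q α μ Ω u :=
  Finset.sum_nonneg fun j _ => mul_nonneg (by rw [coefA]; positivity) (pow_nonneg hu j)

lemma Q_zero (α μ : ℕ) (hμ : 1 ≤ μ) (Ω : ℝ) : Q α μ Ω 0 = 1 := by
  rw [Q, Finset.sum_eq_single 0]
  · simp [coefA]
  · intro j _ hj; simp [zero_pow hj]
  · intro h; exact absurd (Finset.mem_range.mpr (by omega)) h

lemma hasDerivAt_G (α μ : ℕ) (hμ : 1 ≤ μ) (Ωs Ωw : ℝ) (hΩs : 0 < Ωs) (hΩw : 0 < Ωw)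
    (t : ℝ) (ht : 0 < t) :
    HasDerivAt (fun t : ℝ => -(Real.exp (-(μ:ℝ) * t ^ ((α:ℝ)/2) * ((Ωs^α)⁻¹+(Ωw^α)⁻¹)) *
        (Q α μ Ωs (t^((α:ℝ)/2)) * Q α μ Ωw (t^((α:ℝ)/2)))))
      (amPdf α μ Ωs Ωw t) t := by
  set p : ℝ := (α:ℝ)/2 with hp
  set C : ℝ := (Ωs^α)⁻¹+(Ωw^α)⁻¹ with hC
  have h1 : HasDerivAt (fun t : ℝ => t^p) (p * t^(p-1)) t :=
    Real.hasDerivAt_rpow_const (Or.inl ht.ne')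
  have hinner : HasDerivAt (fun t : ℝ => -(μ:ℝ) * t^p * C) (-(μ:ℝ) * (p*t^(p-1)) * C) t :=
    (h1.const_mul (-(μ:ℝ))).mul_const C
  have hexp := hinner.exp
  have hQs : HasDerivAt (fun t : ℝ => Q α μ Ωs (t^p)) (Q' α μ Ωs (t^p) * (p*t^(p-1))) t :=
    by have := (hasDerivAt_Q α μ Ωs (t^p)).comp t h1; exact this
  have hQw : HasDerivAt (fun t : ℝ => Q α μ Ωw (t^p)) (Q' α μ Ωw (t^p) * (p*t^(p-1))) t :=
    by have := (hasDerivAt_Q α μ Ωw (t^p)).comp t h1; exact this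
  have htot := (hexp.mul (hQs.mul hQw)).neg
  refine htot.congr_deriv (Eq.symm ?_)
  simp only [Pi.mul_apply]
  have htel_s := telescope α μ Ωs hΩs (t^p)
  have htel_w := telescope α μ Ωw hΩw (t^p)
  rw [pdf_eq α μ hμ Ωs Ωw hΩs hΩw t ht]
  set E : ℝ := Real.exp (-(μ:ℝ) * t^p * C)
  set u : ℝ := t^p
  linear_combination (-(E * (p*t^(p-1)) * Q α μ Ωw u)) * htel_s +
    (-(E * (p*t^(p-1)) * Q α μ Ωs u)) * htel_w

end AMaux

namespace AMaux

lemma contQ (α μ : ℕ) (Ω : ℝ) : Continuous (fun u : ℝ => Q α μ Ω u) := by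
  apply continuous_finset_sum
  intro j _
  exact continuous_const.mul (continuous_pow j)

lemma contG (α μ : ℕ) (Ωs Ωw : ℝ) :
    Continuous (fun t : ℝ => -(Real.exp (-(μ:ℝ) * t ^ ((α:ℝ)/2) * ((Ωs^α)⁻¹+(Ωw^α)⁻¹)) *
      (Q α μ Ωs (t^((α:ℝ)/2)) * Q α μ Ωw (t^((α:ℝ)/2))))) := by
  have hrp : Continuous (fun t : ℝ => t ^ ((α:ℝ)/2)) :=
    Real.continuous_rpow_const (by positivity)
  exact ((Real.continuous_exp.comp ((continuous_const.mul hrp).mul continuous_const)).mul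
    (((contQ α μ Ωs).comp hrp).mul ((contQ α μ Ωw).comp hrp))).neg

set_option maxHeartbeats 1000000 in
lemma intervalIntegrable_pdf (α μ : ℕ) (hα : 1 ≤ α) (hμ : 1 ≤ μ) (Ωs Ωw : ℝ) (x : ℝ) :
    IntervalIntegrable (amPdf α μ Ωs Ωw) volume 0 x := by
  have hα' : (1:ℝ) ≤ (α:ℝ) := by exact_mod_cast hα
  have hμ' : (1:ℝ) ≤ (μ:ℝ) := by exact_mod_cast hμ
  have hterm : ∀ (Ω : ℝ) (m : ℕ), IntervalIntegrable
      (fun t : ℝ => (μ:ℝ) ^ (μ + m) * t ^ ((α * (μ + m) : ℝ) / 2 - 1) /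
        (m.factorial * Ω ^ (m * α))) volume 0 x := by
    intro Ω m
    have hm : (0:ℝ) ≤ (m:ℝ) := Nat.cast_nonneg m
    have hq : (-1:ℝ) < (α * (μ + m) : ℝ) / 2 - 1 := by nlinarith
    exact ((intervalIntegral.intervalIntegrable_rpow' hq).const_mul _).div_const _
  have hE : Continuous (fun t : ℝ =>
      Real.exp (-(μ:ℝ) * t ^ ((α:ℝ)/2) * ((Ωs^α)⁻¹+(Ωw^α)⁻¹))) :=
    Real.continuous_exp.comp ((continuous_const.mul (Real.continuous_rpow_const
      (by positivity : (0:ℝ) ≤ (α:ℝ)/2))).mul continuous_const)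
  have hW : IntervalIntegrable (fun t : ℝ =>
      ((α:ℝ) / (2 * Ωs ^ (α * μ) * Real.Gamma μ)) *
        ∑ m ∈ Finset.range μ,
          (μ:ℝ) ^ (μ + m) * t ^ ((α * (μ + m) : ℝ) / 2 - 1) / (m.factorial * Ωw ^ (m * α)) +
      ((α:ℝ) / (2 * Ωw ^ (α * μ) * Real.Gamma μ)) *
        ∑ n ∈ Finset.range μ,
          (μ:ℝ) ^ (μ + n) * t ^ ((α * (μ + n) : ℝ) / 2 - 1) / (n.factorial * Ωs ^ (n * α)))
      volume 0 x := by
    have hsum : ∀ (Ω : ℝ), IntervalIntegrable (fun t : ℝ => ∑ m ∈ Finset.range μ,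
        (μ:ℝ) ^ (μ + m) * t ^ ((α * (μ + m) : ℝ) / 2 - 1) / (m.factorial * Ω ^ (m * α)))
        volume 0 x := by
      intro Ω
      have h2 := IntervalIntegrable.sum (μ := volume) (a := 0) (b := x) (Finset.range μ)
        (f := fun m t => (μ:ℝ) ^ (μ + m) * t ^ ((α * (μ + m) : ℝ) / 2 - 1) /
          (m.factorial * Ω ^ (m * α)))
        (fun m _ => hterm Ω m)
      rw [Finset.sum_fn] at h2
      exact h2
    exact ((hsum Ωw).const_mul _).add ((hsum Ωs).const_mul _)
  have heq : amPdf α μ Ωs Ωw = fun t : ℝ =>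
      Real.exp (-(μ:ℝ) * t ^ ((α:ℝ)/2) * ((Ωs^α)⁻¹+(Ωw^α)⁻¹)) *
      (((α:ℝ) / (2 * Ωs ^ (α * μ) * Real.Gamma μ)) *
        ∑ m ∈ Finset.range μ,
          (μ:ℝ) ^ (μ + m) * t ^ ((α * (μ + m) : ℝ) / 2 - 1) / (m.factorial * Ωw ^ (m * α)) +
      ((α:ℝ) / (2 * Ωw ^ (α * μ) * Real.Gamma μ)) *
        ∑ n ∈ Finset.range μ,
          (μ:ℝ) ^ (μ + n) * t ^ ((α * (μ + n) : ℝ) / 2 - 1) / (n.factorial * Ωs ^ (n * α))) := by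
    funext t
    rw [amPdf]
    ring
  rw [heq]
  exact hW.continuousOn_mul hE.continuousOn

lemma integral_pdf (α μ : ℕ) (hα : 1 ≤ α) (hμ : 1 ≤ μ) (Ωs Ωw : ℝ)
    (hΩs : 0 < Ωs) (hΩw : 0 < Ωw) (x : ℝ) (hx : 0 < x) :
    ∫ t in (0:ℝ)..x, amPdf α μ Ωs Ωw t =
      1 - Real.exp (-(μ:ℝ) * x ^ ((α:ℝ)/2) * ((Ωs^α)⁻¹+(Ωw^α)⁻¹)) *
        (Q α μ Ωs (x^((α:ℝ)/2)) * Q α μ Ωw (x^((α:ℝ)/2))) := by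
  have hFTC := intervalIntegral.integral_eq_sub_of_hasDeriv_right_of_le hx.le
    (contG α μ Ωs Ωw).continuousOn
    (fun t ht => ((hasDerivAt_G α μ hμ Ωs Ωw hΩs hΩw t ht.1)).hasDerivWithinAt)
    (intervalIntegrable_pdf α μ hα hμ Ωs Ωw x)
  rw [hFTC]
  have hα0 : ((α:ℝ)/2) ≠ 0 := by
    have : (1:ℝ) ≤ (α:ℝ) := by exact_mod_cast hα
    positivity
  rw [Real.zero_rpow hα0, Q_zero α μ hμ, Q_zero α μ hμ]
  simp
  ring

end AMaux

namespace AMaux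

lemma S_eq (α μ : ℕ) (Ω t : ℝ) (ht : 0 ≤ t) :
    ∑ j ∈ Finset.range μ, (μ:ℝ)^j * t ^ ((j*α:ℝ)/2) / (j.factorial * Ω^(j*α)) =
      Q α μ Ω (t^((α:ℝ)/2)) := by
  rw [Q]
  refine Finset.sum_congr rfl fun j _ => ?_
  have h1 : (t^((α:ℝ)/2))^j = t ^ ((j*α:ℝ)/2) := by
    rw [← Real.rpow_natCast (t^((α:ℝ)/2)) j, ← Real.rpow_mul ht]
    congr 1
    ring
  rw [coefA, h1]
  ring

lemma EQ_le_one (α μ : ℕ) (Ω : ℝ) (hΩ : 0 < Ω) (t : ℝ) (ht : 0 ≤ t) :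
    Real.exp (-(μ:ℝ) * t^((α:ℝ)/2) / Ω^α) * Q α μ Ω (t^((α:ℝ)/2)) ≤ 1 := by
  set s : ℝ := (μ:ℝ) * t^((α:ℝ)/2) / Ω^α with hs
  have hs0 : 0 ≤ s := by
    have := Real.rpow_nonneg ht ((α:ℝ)/2)
    positivity
  have hQ : Q α μ Ω (t^((α:ℝ)/2)) = ∑ j ∈ Finset.range μ, s^j / j.factorial := by
    rw [Q]
    refine Finset.sum_congr rfl fun j _ => ?_
    have h2 : s^j = (μ:ℝ)^j * (t^((α:ℝ)/2))^j / Ω^(j*α) := by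
      rw [hs, div_pow, mul_pow, ← pow_mul, Nat.mul_comm α j]
    rw [h2, coefA]
    ring
  have hexps : -s = -(μ:ℝ) * t^((α:ℝ)/2) / Ω^α := by rw [hs]; ring
  rw [hQ, ← hexps]
  calc Real.exp (-s) * ∑ j ∈ Finset.range μ, s^j / j.factorial
      ≤ Real.exp (-s) * Real.exp s := by
        exact mul_le_mul_of_nonneg_left (Real.sum_le_exp_of_nonneg hs0 μ)
          (Real.exp_nonneg _)
    _ = 1 := by rw [← Real.exp_add]; simp

lemma EQ_nonneg (α μ : ℕ) (Ω : ℝ) (hΩ : 0 < Ω) (t : ℝ) (ht : 0 ≤ t) :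
    0 ≤ Real.exp (-(μ:ℝ) * t^((α:ℝ)/2) / Ω^α) * Q α μ Ω (t^((α:ℝ)/2)) :=
  mul_nonneg (Real.exp_nonneg _) (Q_nonneg α μ Ω hΩ _ (Real.rpow_nonneg ht _))

lemma pdf_nonneg (α μ : ℕ) (hμ : 1 ≤ μ) (Ωs Ωw : ℝ) (hΩs : 0 < Ωs) (hΩw : 0 < Ωw)
    (t : ℝ) (ht : 0 < t) : 0 ≤ amPdf α μ Ωs Ωw t := by
  rw [pdf_eq α μ hμ Ωs Ωw hΩs hΩw t ht]
  have hu : (0:ℝ) ≤ t^((α:ℝ)/2) := Real.rpow_nonneg ht.le _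
  have ht1 : (0:ℝ) ≤ t^((α:ℝ)/2 - 1) := Real.rpow_nonneg ht.le _
  have hcs : 0 ≤ coefA α μ Ωs μ := by rw [coefA]; positivity
  have hcw : 0 ≤ coefA α μ Ωw μ := by rw [coefA]; positivity
  have hQs := Q_nonneg α μ Ωs hΩs _ hu
  have hQw := Q_nonneg α μ Ωw hΩw _ hu
  have hup : (0:ℝ) ≤ (t^((α:ℝ)/2))^(μ-1) := pow_nonneg hu _
  apply mul_nonneg (mul_nonneg (Real.exp_nonneg _) (by positivity))
  apply add_nonneg
  · apply mul_nonneg (mul_nonneg (mul_nonneg (by positivity) hcs) hup) hQw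
  · apply mul_nonneg hQs (mul_nonneg (mul_nonneg (by positivity) hcw) hup)

end AMaux

open AMaux in
/-- The PDF of the minimum of two independent α-μ distributed channel gains. -/
theorem alphaMu_min_pdf {S : Type*} [MeasurableSpace S] (P : Measure S)
    [IsProbabilityMeasure P]
    (α μ : ℕ) (hα : 1 ≤ α) (hμ : 1 ≤ μ)
    (Ωs Ωw : ℝ) (hΩs : 0 < Ωs) (hΩw : 0 < Ωw)
    (gs gw : S → ℝ) (hms : Measurable gs) (hmw : Measurable gw)
    (hindep : ProbabilityTheory.IndepFun gs gw P)
    (hposs : ∀ᵐ ω ∂P, 0 < gs ω) (hposw : ∀ᵐ ω ∂P, 0 < gw ω)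
    (hcdfs : ∀ x : ℝ, 0 ≤ x → P {ω | gs ω ≤ x} =
      ENNReal.ofReal (1 - Real.exp (-(μ:ℝ) * x ^ ((α : ℝ) / 2) / Ωs ^ α) *
        ∑ j ∈ Finset.range μ, (μ:ℝ) ^ j * x ^ ((j * α : ℝ) / 2) / (j.factorial * Ωs ^ (j * α))))
    (hcdfw : ∀ x : ℝ, 0 ≤ x → P {ω | gw ω ≤ x} =
      ENNReal.ofReal (1 - Real.exp (-(μ:ℝ) * x ^ ((α : ℝ) / 2) / Ωw ^ α) *
        ∑ j ∈ Finset.range μ, (μ:ℝ) ^ j * x ^ ((j * α : ℝ) / 2) / (j.factorial * Ωw ^ (j * α)))) :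
    Measure.map (fun ω => min (gs ω) (gw ω)) P =
      (volume.restrict (Set.Ioi (0:ℝ))).withDensity (fun x => ENNReal.ofReal
        ((α * Real.exp (-(μ:ℝ) * x ^ ((α : ℝ) / 2) * ((Ωs ^ α)⁻¹ + (Ωw ^ α)⁻¹))) /
            (2 * Ωs ^ (α * μ) * Real.Gamma μ) *
          ∑ m ∈ Finset.range μ,
            (μ:ℝ) ^ (μ + m) * x ^ ((α * (μ + m) : ℝ) / 2 - 1) / (m.factorial * Ωw ^ (m * α)) +
         (α * Real.exp (-(μ:ℝ) * x ^ ((α : ℝ) / 2) * ((Ωs ^ α)⁻¹ + (Ωw ^ α)⁻¹))) /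
            (2 * Ωw ^ (α * μ) * Real.Gamma μ) *
          ∑ n ∈ Finset.range μ,
            (μ:ℝ) ^ (μ + n) * x ^ ((α * (μ + n) : ℝ) / 2 - 1) / (n.factorial * Ωs ^ (n * α)))) := by
  have hmin : Measurable fun ω => min (gs ω) (gw ω) := hms.min hmw
  have hprob : IsProbabilityMeasure (Measure.map (fun ω => min (gs ω) (gw ω)) P) :=
    Measure.isProbabilityMeasure_map hmin.aemeasurable
  suffices h : Measure.map (fun ω => min (gs ω) (gw ω)) P =
      (volume.restrict (Set.Ioi (0:ℝ))).withDensity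
        (fun x => ENNReal.ofReal (amPdf α μ Ωs Ωw x)) by exact h
  refine Measure.ext_of_Iic _ _ (fun a => ?_)
  rw [Measure.map_apply hmin measurableSet_Iic,
    withDensity_apply _ measurableSet_Iic, Measure.restrict_restrict measurableSet_Iic]
  rcases le_or_gt a 0 with ha | ha
  · -- trivial case a ≤ 0
    have h1 : Set.Iic a ∩ Set.Ioi (0:ℝ) = ∅ := by
      ext y; simp only [Set.mem_inter_iff, Set.mem_Iic, Set.mem_Ioi, Set.mem_empty_iff_false,
        iff_false, not_and, not_lt]
      intro hy; linarith
    rw [h1, Measure.restrict_empty, lintegral_zero_measure]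
    refine measure_mono_null ?_
      (measure_union_null (ae_iff.mp hposs) (ae_iff.mp hposw))
    intro ω hω
    simp only [Set.mem_preimage, Set.mem_Iic] at hω
    rcases min_le_iff.mp hω with h | h
    · exact Or.inl (by simp only [Set.mem_setOf_eq, not_lt]; linarith)
    · exact Or.inr (by simp only [Set.mem_setOf_eq, not_lt]; linarith)
  · -- main case 0 < a
    have hIoc : Set.Iic a ∩ Set.Ioi (0:ℝ) = Set.Ioc 0 a := by
      ext y; simp only [Set.mem_inter_iff, Set.mem_Iic, Set.mem_Ioi, Set.mem_Ioc]; tauto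
    rw [hIoc]
    -- compute RHS
    have hInt : IntegrableOn (amPdf α μ Ωs Ωw) (Set.Ioc 0 a) volume := by
      have h2 := intervalIntegrable_pdf α μ hα hμ Ωs Ωw a
      rw [intervalIntegrable_iff, Set.uIoc_of_le ha.le] at h2
      exact h2
    have hnn : 0 ≤ᵐ[volume.restrict (Set.Ioc 0 a)] amPdf α μ Ωs Ωw :=
      (ae_restrict_iff' measurableSet_Ioc).mpr
        (ae_of_all _ fun t ht => pdf_nonneg α μ hμ Ωs Ωw hΩs hΩw t ht.1)
    have hRHS : ∫⁻ t in Set.Ioc 0 a, ENNReal.ofReal (amPdf α μ Ωs Ωw t) =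
        ENNReal.ofReal (1 - Real.exp (-(μ:ℝ) * a ^ ((α:ℝ)/2) * ((Ωs^α)⁻¹+(Ωw^α)⁻¹)) *
          (Q α μ Ωs (a^((α:ℝ)/2)) * Q α μ Ωw (a^((α:ℝ)/2)))) := by
      rw [← ofReal_integral_eq_lintegral_ofReal hInt hnn,
        ← intervalIntegral.integral_of_le ha.le,
        integral_pdf α μ hα hμ Ωs Ωw hΩs hΩw a ha]
    rw [hRHS]
    -- compute LHS
    set Qsv : ℝ := Real.exp (-(μ:ℝ) * a ^ ((α:ℝ)/2) / Ωs ^ α) * Q α μ Ωs (a^((α:ℝ)/2))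
      with hQsv
    set Qwv : ℝ := Real.exp (-(μ:ℝ) * a ^ ((α:ℝ)/2) / Ωw ^ α) * Q α μ Ωw (a^((α:ℝ)/2))
      with hQwv
    have hQs0 : 0 ≤ Qsv := EQ_nonneg α μ Ωs hΩs a ha.le
    have hQw0 : 0 ≤ Qwv := EQ_nonneg α μ Ωw hΩw a ha.le
    have hQs1 : Qsv ≤ 1 := EQ_le_one α μ Ωs hΩs a ha.le
    have hQw1 : Qwv ≤ 1 := EQ_le_one α μ Ωw hΩw a ha.le
    have hSs : P {ω | gs ω ≤ a} = ENNReal.ofReal (1 - Qsv) := by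
      rw [hcdfs a ha.le]
      congr 2
      rw [hQsv, S_eq α μ Ωs a ha.le]
    have hSw : P {ω | gw ω ≤ a} = ENNReal.ofReal (1 - Qwv) := by
      rw [hcdfw a ha.le]
      congr 2
      rw [hQwv, S_eq α μ Ωw a ha.le]
    have hPs : P (gs ⁻¹' Set.Ioi a) = ENNReal.ofReal Qsv := by
      have hc : gs ⁻¹' Set.Ioi a = {ω | gs ω ≤ a}ᶜ := by ext ω; simp [not_le]
      have hmeas : MeasurableSet {ω | gs ω ≤ a} := hms measurableSet_Iic
      rw [hc, measure_compl hmeas (measure_ne_top _ _), measure_univ, hSs,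
        ← ENNReal.ofReal_one, ← ENNReal.ofReal_sub _ (by linarith : (0:ℝ) ≤ 1 - Qsv)]
      norm_num
    have hPw : P (gw ⁻¹' Set.Ioi a) = ENNReal.ofReal Qwv := by
      have hc : gw ⁻¹' Set.Ioi a = {ω | gw ω ≤ a}ᶜ := by ext ω; simp [not_le]
      have hmeas : MeasurableSet {ω | gw ω ≤ a} := hmw measurableSet_Iic
      rw [hc, measure_compl hmeas (measure_ne_top _ _), measure_univ, hSw,
        ← ENNReal.ofReal_one, ← ENNReal.ofReal_sub _ (by linarith : (0:ℝ) ≤ 1 - Qwv)]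
      norm_num
    have hcompl : (fun ω => min (gs ω) (gw ω)) ⁻¹' Set.Iic a =
        ((gs ⁻¹' Set.Ioi a) ∩ (gw ⁻¹' Set.Ioi a))ᶜ := by
      ext ω
      simp only [Set.mem_preimage, Set.mem_Iic, Set.mem_compl_iff, Set.mem_inter_iff,
        Set.mem_Ioi, min_le_iff, not_and_or, not_lt]
    rw [hcompl, measure_compl ((hms measurableSet_Ioi).inter (hmw measurableSet_Ioi))
        (measure_ne_top _ _), measure_univ,
      hindep.measure_inter_preimage_eq_mul _ _ measurableSet_Ioi measurableSet_Ioi,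
      hPs, hPw, ← ENNReal.ofReal_mul hQs0,
      ← ENNReal.ofReal_one, ← ENNReal.ofReal_sub _ (mul_nonneg hQs0 hQw0)]
    congr 1
    rw [hQsv, hQwv]
    have hexp : Real.exp (-(μ:ℝ) * a ^ ((α:ℝ)/2) / Ωs ^ α) *
        Real.exp (-(μ:ℝ) * a ^ ((α:ℝ)/2) / Ωw ^ α) =
        Real.exp (-(μ:ℝ) * a ^ ((α:ℝ)/2) * ((Ωs^α)⁻¹+(Ωw^α)⁻¹)) := by
      rw [← Real.exp_add]
      congr 1
      ring
    linear_combination (-(Q α μ Ωs (a^((α:ℝ)/2)) * Q α μ Ωw (a^((α:ℝ)/2)))) * hexp
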